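/- Define S_n = ((7n² - 3n - 2)/2) · (-1)^(n-1) + 3 · Σ_{i=2}^{n} 2^(i+1) · (2i-4)!/(i!(i-2)!) · C(n-i+2, 2) · (-1)^(n-i) for n ≥ 1. Then S_n < 8^n for all n ≥ 1. -/

import Mathlib

open Finset

/-- The exact formula for `S_n(1342)`, the number of 1342-avoiding
permutations of length `n`. -/
def S1342 (n : ℕ) : ℚ :=
  ((7 * (n : ℚ) ^ 2 - 3 * n - 2) / 2) * (-1) ^ (n - 1) +
    3 * ∑ i ∈ Finset.Icc 2 n,
      2 ^ (i + 1) * (Nat.factorial (2 * i - 4) : ℚ) /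
        (Nat.factorial i * Nat.factorial (i - 2)) *
        (Nat.choose (n - i + 2) 2) * (-1) ^ (n - i)

lemma central_le (k : ℕ) : (2*k).choose k ≤ 4 ^ k := by
  calc (2*k).choose k ≤ ∑ i ∈ Finset.range (2*k+1), (2*k).choose i :=
        Finset.single_le_sum (fun i _ => Nat.zero_le _)
          (by simp [Finset.mem_range]; omega)
    _ = 2 ^ (2*k) := Nat.sum_range_choose _
    _ = 4 ^ k := by rw [pow_mul]; norm_num

lemma choose2_le (j : ℕ) : (j+2).choose 2 ≤ 3 * 2 ^ j := by
  induction j with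
  | zero => simp
  | succ j ih =>
    have h1 : (j+1+2).choose 2 = (j+2).choose 2 + (j+2) := by
      rw [show j+1+2 = j+3 from rfl, Nat.choose_succ_succ]
      simp [Nat.choose_one_right]
      omega
    have h2 : j + 2 ≤ 3 * 2 ^ j := by
      have : 1 ≤ 2 ^ j := Nat.one_le_two_pow
      have := Nat.lt_two_pow_self (n := j)
      omega
    have h3 : 3 * 2 ^ (j+1) = 3 * 2^j + 3 * 2^j := by ring
    omega

lemma key_nat (k j : ℕ) :
    2^(k+3) * (2*k).factorial * ((j+2).choose 2) ≤
    3 * 2^(k+2+j) * 4^k * ((k+2).factorial * k.factorial) := by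
  have hf : (2*k).factorial = (2*k).choose k * k.factorial * k.factorial := by
    have h := Nat.choose_mul_factorial_mul_factorial
      (show k ≤ 2*k by omega)
    rw [show 2*k - k = k by omega] at h
    omega
  have h1 := central_le k
  have h2 := choose2_le j
  have hfe : (k+2).factorial = (k+2) * ((k+1) * k.factorial) := by
    rw [Nat.factorial_succ, Nat.factorial_succ]
  have hfac1 : 1 ≤ k.factorial := Nat.one_le_iff_ne_zero.mpr (Nat.factorial_ne_zero k)
  have h3 : 2 * k.factorial ≤ (k+2).factorial := by
    have h22 : 2 ≤ (k+2)*(k+1) := by nlinarith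
    calc 2 * k.factorial ≤ ((k+2)*(k+1)) * k.factorial :=
          Nat.mul_le_mul_right _ h22
      _ = (k+2) * ((k+1) * k.factorial) := by ring
      _ = (k+2).factorial := hfe.symm
  calc 2^(k+3) * (2*k).factorial * ((j+2).choose 2)
      = 2^(k+3) * ((2*k).choose k * k.factorial * k.factorial) * ((j+2).choose 2) := by
        rw [hf]
    _ ≤ 2^(k+3) * (4^k * k.factorial * k.factorial) * (3 * 2^j) := by
        refine Nat.mul_le_mul (Nat.mul_le_mul_left _ ?_) h2
        exact Nat.mul_le_mul_right _ (Nat.mul_le_mul_right _ h1)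
    _ = 3 * (2^(k+2) * 2^j) * 4^k * ((2 * k.factorial) * k.factorial) := by ring
    _ ≤ 3 * (2^(k+2) * 2^j) * 4^k * ((k+2).factorial * k.factorial) := by
        exact Nat.mul_le_mul_left _ (Nat.mul_le_mul_right _ h3)
    _ = 3 * 2^(k+2+j) * 4^k * ((k+2).factorial * k.factorial) := by
        rw [pow_add, pow_add]; ring

lemma mygeom_le (n : ℕ) : ∑ i ∈ Finset.Icc 2 n, (4:ℚ)^(i-2) ≤ 4^n / 12 := by
  induction n with
  | zero => simp
  | succ m ih =>
    rcases Nat.lt_or_ge m 1 with h | h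
    · interval_cases m
      norm_num
    · rw [Finset.sum_Icc_succ_top (by omega : 2 ≤ m+1)]
      have e1 : (4:ℚ)^(m+1) = 4 * 4^m := by rw [pow_succ]; ring
      have e2 : (4:ℚ)^(m+1-2) * 4 = 4^m := by
        rw [← pow_succ]; congr 1; omega
      linarith

lemma neg_one_pow_le_one (e : ℕ) : ((-1:ℚ))^e ≤ 1 := by
  rcases Nat.even_or_odd e with he | he
  · rw [he.neg_one_pow]
  · rw [he.neg_one_pow]; norm_num

lemma pow14 (n : ℕ) (hn : 2 ≤ n) : 14 * n^2 < 8^n := by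
  induction n with
  | zero => omega
  | succ m ih =>
    rcases Nat.lt_or_ge m 2 with h | h
    · interval_cases m
      · omega
      · norm_num
    · have := ih h
      have h8 : 8^(m+1) = 8 * 8^m := by ring
      nlinarith

theorem S1342_lt_eight_pow (n : ℕ) (hn : 1 ≤ n) : S1342 n < 8 ^ n := by
  rcases Nat.lt_or_ge n 2 with h | h
  · interval_cases n
    show S1342 1 < 8^1
    rw [S1342, show Finset.Icc 2 1 = (∅ : Finset ℕ) from rfl]
    norm_num
  -- termwise bound on the sum
  have hterm : ∀ i ∈ Finset.Icc 2 n,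
      2 ^ (i + 1) * (Nat.factorial (2 * i - 4) : ℚ) /
        (Nat.factorial i * Nat.factorial (i - 2)) *
        (Nat.choose (n - i + 2) 2) * (-1) ^ (n - i) ≤ 3 * 2^n * 4^(i-2) := by
    intro i hi
    rw [Finset.mem_Icc] at hi
    obtain ⟨hi2, hin⟩ := hi
    set B : ℚ := 2 ^ (i + 1) * (Nat.factorial (2 * i - 4) : ℚ) /
        (Nat.factorial i * Nat.factorial (i - 2)) *
        (Nat.choose (n - i + 2) 2) with hB
    have hBnn : 0 ≤ B := by
      rw [hB]
      positivity
    have step1 : B * (-1)^(n-i) ≤ B := by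
      calc B * (-1)^(n-i) ≤ B * 1 :=
            mul_le_mul_of_nonneg_left (neg_one_pow_le_one _) hBnn
        _ = B := mul_one B
    refine step1.trans ?_
    -- bound B
    have hGpos : (0:ℚ) < (Nat.factorial i : ℚ) * (Nat.factorial (i-2) : ℚ) := by
      positivity
    rw [hB, div_mul_eq_mul_div, div_le_iff₀ hGpos]
    obtain ⟨k, hk⟩ : ∃ k, i = k + 2 := ⟨i - 2, by omega⟩
    obtain ⟨j, hj⟩ : ∃ j, n = k + 2 + j := ⟨n - i, by omega⟩
    subst hk
    subst hj
    have e1 : 2 * (k+2) - 4 = 2*k := by omega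
    have e2 : k + 2 - 2 = k := by omega
    have e3 : k + 2 + j - (k + 2) + 2 = j + 2 := by omega
    rw [e1, e2, e3, show k+2+1 = k+3 from rfl]
    exact_mod_cast key_nat k j
  have hsum := Finset.sum_le_sum hterm
  have hsum2 : ∑ i ∈ Finset.Icc 2 n, (3 * 2^n * 4^(i-2) : ℚ) ≤ (8:ℚ)^n / 4 := by
    rw [← Finset.mul_sum]
    have := mygeom_le n
    have h84 : (8:ℚ)^n = 2^n * 4^n := by
      rw [← mul_pow]; norm_num
    have h2pos : (0:ℚ) < 2^n := by positivity
    calc 3 * (2:ℚ)^n * ∑ i ∈ Finset.Icc 2 n, (4:ℚ)^(i-2)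
        ≤ 3 * 2^n * (4^n/12) := by
          refine mul_le_mul_of_nonneg_left this (by positivity)
      _ = (8:ℚ)^n / 4 := by rw [h84]; ring
  have hfirst : ((7 * (n : ℚ) ^ 2 - 3 * n - 2) / 2) * (-1) ^ (n - 1) ≤ 7 * (n:ℚ)^2 / 2 := by
    have hX : (0:ℚ) ≤ (7 * (n : ℚ) ^ 2 - 3 * n - 2) / 2 := by
      have : (2:ℚ) ≤ (n:ℚ) := by exact_mod_cast h
      nlinarith
    calc ((7 * (n : ℚ) ^ 2 - 3 * n - 2) / 2) * (-1) ^ (n - 1)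
        ≤ ((7 * (n : ℚ) ^ 2 - 3 * n - 2) / 2) * 1 :=
          mul_le_mul_of_nonneg_left (neg_one_pow_le_one _) hX
      _ ≤ 7 * (n:ℚ)^2 / 2 := by
          have : (0:ℚ) ≤ (n:ℚ) := by positivity
          nlinarith
  have hp := pow14 n h
  have hpQ : 14 * (n:ℚ)^2 < 8^n := by exact_mod_cast hp
  rw [S1342]
  have := hsum.trans hsum2
  nlinarith [this, hfirst, hpQ]
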